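/- arXiv:1412.7331 — 2 statements merged into one kernel-verified Lean document; each statement's English description precedes it below -/
import Mathlib

section
/- Let (a_i) be a bounded sequence of reals. If lim_{n→∞} (1/n)∑_{i=1}^n a_i exists, then lim_{λ→0+} λ∑_{i=1}^∞ (1-λ)^{i-1} a_i exists and the two limits are equal. -/
open Filter

set_option maxHeartbeats 1000000


lemma hardy_aux (x ε' : ℝ) (hx0 : 0 < x) (hx1 : x < 1) (hε' : 0 ≤ ε') (c : ℕ → ℝ)
    (habs : Summable fun i : ℕ => x ^ i * |c i|) (N : ℕ)
    (htail : ∀ i, N ≤ i → |c i| ≤ ((i : ℝ) + 1) * ε')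
    (hN : HasSum (fun n : ℕ => ((n : ℝ) + 1) * x ^ n) (1 / (1 - x) ^ 2)) :
    ∑' i : ℕ, x ^ (i + N) * |c (i + N)| ≤ ε' * (1 / (1 - x) ^ 2) := by
  have hNs : Summable (fun n : ℕ => ((n : ℝ) + 1) * x ^ n) := hN.summable
  have hxpow : ∀ i : ℕ, (0 : ℝ) ≤ x ^ i := fun i => pow_nonneg hx0.le i
  have h1 : ∑' i : ℕ, x ^ (i + N) * |c (i + N)|
      ≤ ∑' i : ℕ, ε' * ((((i + N : ℕ) : ℝ) + 1) * x ^ (i + N)) := by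
    have S1 : Summable fun i : ℕ => x ^ (i + N) * |c (i + N)| :=
      (summable_nat_add_iff (f := fun n : ℕ => x ^ n * |c n|) N).mpr habs
    have S2 : Summable fun i : ℕ => ε' * ((((i + N : ℕ) : ℝ) + 1) * x ^ (i + N)) :=
      ((summable_nat_add_iff (f := fun n : ℕ => ((n : ℝ) + 1) * x ^ n) N).mpr hNs).mul_left ε'
    apply Summable.tsum_le_tsum _ S1 S2
    intro i
    have hb := htail (i + N) (Nat.le_add_left N i)
    calc x ^ (i + N) * |c (i + N)|
        ≤ x ^ (i + N) * ((((i + N : ℕ) : ℝ) + 1) * ε') := by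
          apply mul_le_mul_of_nonneg_left hb (hxpow _)
      _ = ε' * ((((i + N : ℕ) : ℝ) + 1) * x ^ (i + N)) := by ring
  have h2 : ∑' i : ℕ, ((((i + N : ℕ) : ℝ) + 1) * x ^ (i + N)) ≤ 1 / (1 - x) ^ 2 := by
    have h3 := Summable.sum_add_tsum_nat_add N hNs
    rw [hN.tsum_eq] at h3
    have h4 : 0 ≤ ∑ i ∈ Finset.range N, (((i : ℕ) : ℝ) + 1) * x ^ i := by
      apply Finset.sum_nonneg
      intro i _
      positivity
    linarith
  calc ∑' i : ℕ, x ^ (i + N) * |c (i + N)|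
      ≤ ∑' i : ℕ, ε' * ((((i + N : ℕ) : ℝ) + 1) * x ^ (i + N)) := h1
    _ = ε' * ∑' i : ℕ, ((((i + N : ℕ) : ℝ) + 1) * x ^ (i + N)) := tsum_mul_left
    _ ≤ ε' * (1 / (1 - x) ^ 2) := by
        apply mul_le_mul_of_nonneg_left h2 hε'

theorem hardy_tauberian_sequences (a : ℕ → ℝ) (C : ℝ) (hC : ∀ i, |a i| ≤ C)
    (L : ℝ)
    (hces : Tendsto (fun n : ℕ => (1 / (n : ℝ)) * ∑ i ∈ Finset.Icc 1 n, a i)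
      atTop (nhds L)) :
    Tendsto (fun l : ℝ => l * ∑' i : ℕ, (1 - l) ^ i * a (i + 1))
      (nhdsWithin 0 (Set.Ioi 0)) (nhds L) := by
  have hC0 : 0 ≤ C := le_trans (abs_nonneg _) (hC 0)
  set s : ℕ → ℝ := fun n => ∑ i ∈ Finset.Icc 1 n, a i with hs_def
  have hsb : ∀ n : ℕ, |s n| ≤ n * C := by
    intro n
    calc |s n| ≤ ∑ i ∈ Finset.Icc 1 n, |a i| := Finset.abs_sum_le_sum_abs _ _
      _ ≤ ∑ i ∈ Finset.Icc 1 n, C := Finset.sum_le_sum fun i _ => hC i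
      _ = n * C := by simp [Nat.card_Icc, mul_comm]
  have hstep : ∀ i : ℕ, s (i + 1) = s i + a (i + 1) := fun i =>
    Finset.sum_Icc_succ_top (by omega) a
  set b : ℕ → ℝ := fun i => s (i + 1) - ((i : ℝ) + 1) * L with hb_def
  -- main estimate for fixed l
  have main : ∀ (N : ℕ) (ε' : ℝ), 0 ≤ ε' → (∀ i, N ≤ i → |b i| ≤ ((i : ℝ) + 1) * ε') →
      ∀ l : ℝ, 0 < l → l < 1 →
      |l * ∑' i : ℕ, (1 - l) ^ i * a (i + 1) - L|
        ≤ l * (∑ i ∈ Finset.range N, |b i|) + ε' := by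
    intro N ε' hε' htail l hl0 hl1
    set x : ℝ := 1 - l with hx_def
    have hx0 : 0 < x := by simp [hx_def]; linarith
    have hx1 : x < 1 := by simp [hx_def]; linarith
    have hxa : |x| < 1 := by rw [abs_of_pos hx0]; exact hx1
    have hN : HasSum (fun n : ℕ => ((n : ℝ) + 1) * x ^ n) (1 / (1 - x) ^ 2) := by
      have h := hasSum_choose_mul_geometric_of_norm_lt_one 1 (r := x)
        (by rwa [Real.norm_eq_abs])
      simpa using h
    have hNs : Summable (fun n : ℕ => ((n : ℝ) + 1) * x ^ n) := hN.summable
    have hgeo : Summable (fun n : ℕ => x ^ n) := summable_geometric_of_lt_one hx0.le hx1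
    have hxpow : ∀ i : ℕ, (0 : ℝ) ≤ x ^ i := fun i => pow_nonneg hx0.le i
    have hxpow1 : ∀ i : ℕ, x ^ i ≤ 1 := fun i => pow_le_one₀ hx0.le hx1.le
    have hsum_s1 : Summable fun i : ℕ => x ^ i * s (i + 1) := by
      apply Summable.of_norm_bounded (hNs.mul_left C)
      intro i
      rw [Real.norm_eq_abs, abs_mul, abs_pow, abs_of_pos hx0]
      have := hsb (i + 1)
      push_cast at this
      calc x ^ i * |s (i + 1)| ≤ x ^ i * (((i : ℝ) + 1) * C) := by
            apply mul_le_mul_of_nonneg_left this (hxpow i)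
        _ = C * (((i : ℝ) + 1) * x ^ i) := by ring
    have hsum_s0 : Summable fun i : ℕ => x ^ i * s i := by
      apply Summable.of_norm_bounded (hNs.mul_left C)
      intro i
      rw [Real.norm_eq_abs, abs_mul, abs_pow, abs_of_pos hx0]
      have h1 := hsb i
      have h2 : (i : ℝ) * C ≤ ((i : ℝ) + 1) * C := by nlinarith
      calc x ^ i * |s i| ≤ x ^ i * (((i : ℝ) + 1) * C) := by
            apply mul_le_mul_of_nonneg_left (h1.trans h2) (hxpow i)
        _ = C * (((i : ℝ) + 1) * x ^ i) := by ring
    have hsum_a : Summable fun i : ℕ => x ^ i * a (i + 1) := by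
      apply Summable.of_norm_bounded (hgeo.mul_left C)
      intro i
      rw [Real.norm_eq_abs, abs_mul, abs_pow, abs_of_pos hx0]
      calc x ^ i * |a (i + 1)| ≤ x ^ i * C := by
            apply mul_le_mul_of_nonneg_left (hC _) (hxpow i)
        _ = C * x ^ i := by ring
    have hsum_nb : Summable fun i : ℕ => x ^ i * (((i : ℝ) + 1) * L) := by
      apply (hNs.mul_right L).congr
      intro i; ring
    have hsum_b : Summable fun i : ℕ => x ^ i * b i := by
      apply (hsum_s1.sub hsum_nb).congr
      intro i; simp [hb_def]; ring
    -- T0 = x * T1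
    have hs00 : s 0 = 0 := by simp [hs_def]
    have hT0 : ∑' i : ℕ, x ^ i * s i = x * ∑' i : ℕ, x ^ i * s (i + 1) := by
      rw [Summable.tsum_eq_zero_add hsum_s0, hs00]
      simp only [mul_zero, zero_add]
      rw [← tsum_mul_left]
      apply tsum_congr
      intro i
      rw [pow_succ']
      ring
    -- identity 1
    have hid1 : ∑' i : ℕ, x ^ i * a (i + 1) = l * ∑' i : ℕ, x ^ i * s (i + 1) := by
      have h0 : ∀ i : ℕ, x ^ i * a (i + 1) = x ^ i * s (i + 1) - x ^ i * s i := by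
        intro i; rw [hstep i]; ring
      calc ∑' i : ℕ, x ^ i * a (i + 1)
          = ∑' i : ℕ, (x ^ i * s (i + 1) - x ^ i * s i) := tsum_congr h0
        _ = (∑' i : ℕ, x ^ i * s (i + 1)) - ∑' i : ℕ, x ^ i * s i :=
            Summable.tsum_sub hsum_s1 hsum_s0
        _ = (∑' i : ℕ, x ^ i * s (i + 1)) - x * ∑' i : ℕ, x ^ i * s (i + 1) := by rw [hT0]
        _ = l * ∑' i : ℕ, x ^ i * s (i + 1) := by rw [hx_def]; ring
    have hl2 : l ^ 2 * (1 / (1 - x) ^ 2) = 1 := by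
      rw [hx_def]
      rw [sub_sub_cancel]
      field_simp
    -- main identity
    have hid : l * (∑' i : ℕ, x ^ i * a (i + 1)) - L = l ^ 2 * ∑' i : ℕ, x ^ i * b i := by
      have h1 : ∑' i : ℕ, x ^ i * b i
          = (∑' i : ℕ, x ^ i * s (i + 1)) - (∑' i : ℕ, ((i : ℝ) + 1) * x ^ i) * L := by
        rw [← tsum_mul_right]
        rw [← Summable.tsum_sub hsum_s1 (by apply (hNs.mul_right L).congr; intro i; ring)]
        apply tsum_congr
        intro i; simp [hb_def]; ring
      rw [hid1, h1, hN.tsum_eq]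
      have : l ^ 2 * ((∑' i : ℕ, x ^ i * s (i + 1)) - 1 / (1 - x) ^ 2 * L)
          = l ^ 2 * (∑' i : ℕ, x ^ i * s (i + 1)) - (l ^ 2 * (1 / (1 - x) ^ 2)) * L := by ring
      rw [this, hl2]
      ring
    -- now the bound
    have habs : Summable fun i : ℕ => x ^ i * |b i| := by
      apply hsum_b.abs.congr
      intro i
      rw [abs_mul, abs_pow, abs_of_pos hx0]
    have hsplit := Summable.sum_add_tsum_nat_add N habs
    have htail_sum : ∑' i : ℕ, x ^ (i + N) * |b (i + N)|
        ≤ ε' * (1 / (1 - x) ^ 2) :=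
      hardy_aux x ε' hx0 hx1 hε' b habs N htail hN
    have hpartial : ∑ i ∈ Finset.range N, x ^ i * |b i| ≤ ∑ i ∈ Finset.range N, |b i| := by
      apply Finset.sum_le_sum
      intro i _
      calc x ^ i * |b i| ≤ 1 * |b i| :=
            mul_le_mul_of_nonneg_right (hxpow1 i) (abs_nonneg _)
        _ = |b i| := one_mul _
    have habs_le : |∑' i : ℕ, x ^ i * b i| ≤ ∑' i : ℕ, x ^ i * |b i| := by
      rw [← Real.norm_eq_abs]
      refine (norm_tsum_le_tsum_norm ?_).trans_eq (tsum_congr fun i => ?_)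
      · apply hsum_b.abs.congr
        intro i
        rw [Real.norm_eq_abs]
      · rw [Real.norm_eq_abs, abs_mul, abs_pow, abs_of_pos hx0]
    have hB0 : 0 ≤ ∑ i ∈ Finset.range N, |b i| :=
      Finset.sum_nonneg fun i _ => abs_nonneg _
    calc |l * ∑' i : ℕ, (1 - l) ^ i * a (i + 1) - L|
        = |l ^ 2 * ∑' i : ℕ, x ^ i * b i| := by rw [← hid]
      _ = l ^ 2 * |∑' i : ℕ, x ^ i * b i| := by
          rw [abs_mul, abs_of_pos (by positivity : (0:ℝ) < l ^ 2)]
      _ ≤ l ^ 2 * (∑' i : ℕ, x ^ i * |b i|) := by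
          apply mul_le_mul_of_nonneg_left habs_le (by positivity)
      _ = l ^ 2 * (∑ i ∈ Finset.range N, x ^ i * |b i|)
            + l ^ 2 * ∑' i : ℕ, x ^ (i + N) * |b (i + N)| := by
          rw [← hsplit]; ring
      _ ≤ l ^ 2 * (∑ i ∈ Finset.range N, |b i|) + l ^ 2 * (ε' * (1 / (1 - x) ^ 2)) := by
          apply add_le_add
          · exact mul_le_mul_of_nonneg_left hpartial (by positivity)
          · exact mul_le_mul_of_nonneg_left htail_sum (by positivity)
      _ = l ^ 2 * (∑ i ∈ Finset.range N, |b i|) + ε' * (l ^ 2 * (1 / (1 - x) ^ 2)) := by ring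
      _ = l ^ 2 * (∑ i ∈ Finset.range N, |b i|) + ε' := by rw [hl2]; ring
      _ ≤ l * (∑ i ∈ Finset.range N, |b i|) + ε' := by
          have : l ^ 2 ≤ l := by nlinarith
          have := mul_le_mul_of_nonneg_right this hB0
          linarith
  -- epsilon-delta argument
  rw [Metric.tendsto_nhdsWithin_nhds]
  intro ε hε
  obtain ⟨N0, hN0⟩ := Metric.tendsto_atTop.mp hces (ε / 4) (by positivity)
  set N := N0 + 1 with hN_def
  have htail : ∀ i, N ≤ i → |b i| ≤ ((i : ℝ) + 1) * (ε / 4) := by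
    intro i hi
    have h1 := hN0 (i + 1) (by omega)
    rw [Real.dist_eq] at h1
    have hpos : (0 : ℝ) < (i : ℝ) + 1 := by positivity
    have hkey : b i = ((i : ℝ) + 1) * (1 / (((i : ℕ) : ℝ) + 1) * s (i + 1) - L) := by
      field_simp [hb_def]
      rfl
    rw [hkey, abs_mul, abs_of_pos hpos]
    apply mul_le_mul_of_nonneg_left _ hpos.le
    apply le_of_lt
    convert h1 using 3
    iterate 3 rfl
    push_cast
    ring
  set B := ∑ i ∈ Finset.range N, |b i| with hB_def
  have hB0 : 0 ≤ B := Finset.sum_nonneg fun i _ => abs_nonneg _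
  refine ⟨min (1 / 2) (ε / (4 * (B + 1))), lt_min (by norm_num) (by positivity), ?_⟩
  intro l hl hdist
  rw [Real.dist_eq, sub_zero] at hdist
  have hl0 : 0 < l := hl
  have hld : l < min (1 / 2) (ε / (4 * (B + 1))) := by
    rwa [abs_of_pos hl0] at hdist
  have hl1 : l < 1 := lt_of_lt_of_le (hld.trans_le (min_le_left _ _)) (by norm_num)
  have hlε : l < ε / (4 * (B + 1)) := hld.trans_le (min_le_right _ _)
  have hbound := main N (ε / 4) (by positivity) htail l hl0 hl1
  rw [Real.dist_eq]
  have hlB : l * B ≤ ε / 4 := by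
    have h1 : l * (B + 1) ≤ (ε / (4 * (B + 1))) * (B + 1) := by nlinarith
    have h2 : (ε / (4 * (B + 1))) * (B + 1) = ε / 4 := by field_simp
    nlinarith
  calc |l * ∑' i : ℕ, (1 - l) ^ i * a (i + 1) - L| ≤ l * B + ε / 4 := hbound
    _ ≤ ε / 4 + ε / 4 := by linarith
    _ < ε := by linarith
end

section
/- Let g : ℝ≥0 → [0,1] be a bounded continuous function. If lim_{T→∞} (1/T)∫₀^T g(t)dt exists and equals L, then lim_{λ→0+} λ∫₀^∞ e^{-λt} g(t)dt exists and equals L. -/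
open Filter MeasureTheory Set

theorem abelian_direction_functions (g : ℝ → ℝ) (hg : Continuous g)
    (hg01 : ∀ t, 0 ≤ g t ∧ g t ≤ 1) (L : ℝ)
    (hces : Tendsto (fun T : ℝ => (1 / T) * ∫ t in (0:ℝ)..T, g t)
      atTop (nhds L)) :
    Tendsto (fun l : ℝ => l * ∫ t in Set.Ioi (0:ℝ), Real.exp (-l * t) * g t)
      (nhdsWithin 0 (Set.Ioi 0)) (nhds L) := by
  set G : ℝ → ℝ := fun T => ∫ t in (0:ℝ)..T, g t with hGdef
  have hGcont : Continuous G :=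
    intervalIntegral.continuous_primitive (fun a b => hg.intervalIntegrable a b) 0
  have hGderiv : ∀ x : ℝ, HasDerivAt G (g x) x := fun x =>
    intervalIntegral.integral_hasDerivAt_right (hg.intervalIntegrable 0 x)
      (hg.stronglyMeasurableAtFilter _ _) hg.continuousAt
  have hGnn : ∀ t : ℝ, 0 ≤ t → 0 ≤ G t := fun t ht =>
    intervalIntegral.integral_nonneg ht (fun x _ => (hg01 x).1)
  have hGle : ∀ t : ℝ, 0 ≤ t → G t ≤ t := by
    intro t ht
    calc G t ≤ ∫ _ in (0:ℝ)..t, (1:ℝ) :=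
          intervalIntegral.integral_mono_on ht (hg.intervalIntegrable 0 t)
            intervalIntegrable_const (fun x _ => (hg01 x).2)
      _ = t := by simp
  -- helper: y * exp (-y) ≤ 1 for 0 ≤ y
  have hye : ∀ y : ℝ, 0 ≤ y → y * Real.exp (-y) ≤ 1 := by
    intro y hy
    have h1 : y ≤ Real.exp y := le_trans (by linarith) (Real.add_one_le_exp y)
    calc y * Real.exp (-y) ≤ Real.exp y * Real.exp (-y) := by
          exact mul_le_mul_of_nonneg_right h1 (Real.exp_pos _).le
      _ = 1 := by rw [← Real.exp_add]; simp
  -- key identity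
  have key : ∀ l : ℝ, 0 < l →
      l * ∫ t in Ioi (0:ℝ), Real.exp (-l * t) * g t
        = ∫ s in Ioi (0:ℝ), Real.exp (-s) * (l * G (s / l)) := by
    intro l hl
    have hexp : ∀ x : ℝ, HasDerivAt (fun t => Real.exp (-l * t)) (-l * Real.exp (-l * x)) x := by
      intro x
      have := ((hasDerivAt_id x).const_mul (-l)).exp
      simpa [mul_comm] using this
    -- integrability of g * exp
    have hint1 : IntegrableOn (fun x => Real.exp (-l * x) * g x) (Ioi (0:ℝ)) := by
      refine Integrable.mono' (exp_neg_integrableOn_Ioi 0 hl) ?_ ?_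
      · exact ((Real.continuous_exp.comp (continuous_const.mul continuous_id)).mul hg).aestronglyMeasurable
      · filter_upwards [ae_restrict_mem measurableSet_Ioi] with x _
        have h1 := (hg01 x).1
        have h2 := (hg01 x).2
        rw [Real.norm_eq_abs, abs_of_nonneg (mul_nonneg (Real.exp_pos _).le h1)]
        calc Real.exp (-l * x) * g x ≤ Real.exp (-l * x) * 1 :=
              mul_le_mul_of_nonneg_left h2 (Real.exp_pos _).le
          _ = Real.exp (-l * x) := mul_one _
    -- integrability of G * exp
    have hbd : ∀ x : ℝ, 0 < x → l * (G x * Real.exp (-l * x)) ≤ 2 * Real.exp (-(l/2) * x) := by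
      intro x hx
      have h1 : G x * Real.exp (-l * x) ≤ x * Real.exp (-l * x) :=
        mul_le_mul_of_nonneg_right (hGle x hx.le) (Real.exp_pos _).le
      have h2 : l * (x * Real.exp (-l * x)) ≤ 2 * Real.exp (-(l/2) * x) := by
        have hy := hye (l * x / 2) (by positivity)
        have hsplit : Real.exp (-l * x) = Real.exp (-(l*x/2)) * Real.exp (-(l/2) * x) := by
          rw [← Real.exp_add]; ring_nf
        calc l * (x * Real.exp (-l * x))
            = 2 * ((l * x / 2) * Real.exp (-(l*x/2))) * Real.exp (-(l/2)*x) := by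
              rw [hsplit]; ring
          _ ≤ 2 * 1 * Real.exp (-(l/2)*x) := by
              have := mul_le_mul_of_nonneg_right (mul_le_mul_of_nonneg_left hy (by norm_num : (0:ℝ) ≤ 2)) (Real.exp_pos (-(l/2)*x)).le
              simpa [mul_assoc] using this
          _ = 2 * Real.exp (-(l/2)*x) := by ring
      calc l * (G x * Real.exp (-l * x)) ≤ l * (x * Real.exp (-l * x)) :=
            mul_le_mul_of_nonneg_left h1 hl.le
        _ ≤ 2 * Real.exp (-(l/2) * x) := h2
    have hint2 : IntegrableOn (fun x => G x * (-l * Real.exp (-l * x))) (Ioi (0:ℝ)) := by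
      refine Integrable.mono' ((exp_neg_integrableOn_Ioi 0 (half_pos hl)).const_mul 2) ?_ ?_
      · exact (hGcont.mul (continuous_const.mul (Real.continuous_exp.comp (continuous_const.mul continuous_id)))).aestronglyMeasurable
      · filter_upwards [ae_restrict_mem measurableSet_Ioi] with x hx
        have hGx := hGnn x (le_of_lt hx)
        rw [Real.norm_eq_abs, abs_of_nonpos (mul_nonpos_of_nonneg_of_nonpos hGx
          (by nlinarith [Real.exp_pos (-l*x)]))]
        nlinarith [hbd x hx]
    -- limits at 0 and ∞
    have h_zero : Tendsto (G * fun t => Real.exp (-l * t)) (nhdsWithin 0 (Ioi 0)) (nhds 0) := by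
      have hc : Continuous (G * fun t => Real.exp (-l * t)) :=
        hGcont.mul (Real.continuous_exp.comp (continuous_const.mul continuous_id))
      have h0 : Tendsto (G * fun t => Real.exp (-l * t)) (nhdsWithin 0 (Ioi 0))
          (nhds ((G * fun t => Real.exp (-l * t)) 0)) :=
        (hc.tendsto 0).mono_left nhdsWithin_le_nhds
      simpa [hGdef, Pi.mul_apply, intervalIntegral.integral_same] using h0
    have h_infty : Tendsto (G * fun t => Real.exp (-l * t)) atTop (nhds 0) := by
      have hb : Tendsto (fun t : ℝ => t * Real.exp (-l * t)) atTop (nhds 0) := by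
        have h1 : Tendsto (fun t : ℝ => l * t) atTop atTop :=
          Tendsto.const_mul_atTop hl tendsto_id
        have h2 := (Real.tendsto_pow_mul_exp_neg_atTop_nhds_zero 1).comp h1
        have h3 := h2.const_mul l⁻¹
        rw [mul_zero] at h3
        refine h3.congr fun t => ?_
        field_simp
        ring_nf
        simp [Function.comp_apply]
      refine tendsto_of_tendsto_of_tendsto_of_le_of_le' tendsto_const_nhds hb ?_ ?_
      · filter_upwards [eventually_ge_atTop (0:ℝ)] with t ht
        exact mul_nonneg (hGnn t ht) (Real.exp_pos _).le
      · filter_upwards [eventually_ge_atTop (0:ℝ)] with t ht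
        exact mul_le_mul_of_nonneg_right (hGle t ht) (Real.exp_pos _).le
    have hparts := integral_Ioi_mul_deriv_eq_deriv_mul
      (u := G) (v := fun t => Real.exp (-l * t)) (u' := g)
      (v' := fun x => -l * Real.exp (-l * x)) (a := 0) (a' := 0) (b' := 0)
      (fun x _ => hGderiv x) (fun x _ => hexp x) hint2
      (by simpa [mul_comm, Pi.mul_def] using hint1) h_zero h_infty
    -- hparts : ∫ x in Ioi 0, G x * (-l * exp (-l*x)) = 0 - 0 - ∫ x in Ioi 0, g x * exp (-l*x)
    have hid1 : ∫ t in Ioi (0:ℝ), Real.exp (-l * t) * g t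
        = l * ∫ t in Ioi (0:ℝ), Real.exp (-l * t) * G t := by
      have e1 : ∫ x in Ioi (0:ℝ), G x * (-l * Real.exp (-l * x))
          = -l * ∫ x in Ioi (0:ℝ), Real.exp (-l * x) * G x := by
        rw [← integral_const_mul]
        exact integral_congr_ae (Eventually.of_forall fun x => by ring)
      have e2 : ∫ x in Ioi (0:ℝ), g x * Real.exp (-l * x)
          = ∫ x in Ioi (0:ℝ), Real.exp (-l * x) * g x :=
        integral_congr_ae (Eventually.of_forall fun x => by ring)
      rw [e1, e2] at hparts
      linarith [hparts]
    -- substitution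
    have hsub : ∫ t in Ioi (0:ℝ), Real.exp (-l * t) * G t
        = l⁻¹ * ∫ s in Ioi (0:ℝ), Real.exp (-s) * G (s / l) := by
      have := integral_comp_mul_left_Ioi (fun t => Real.exp (-l * t) * G t) 0
        (inv_pos.mpr hl)
      simp only [mul_zero, inv_inv, smul_eq_mul] at this
      have e : ∀ s : ℝ, Real.exp (-l * (l⁻¹ * s)) * G (l⁻¹ * s)
          = Real.exp (-s) * G (s / l) := by
        intro s
        have h1 : l⁻¹ * s = s / l := (div_eq_inv_mul s l).symm
        have h2 : -l * (l⁻¹ * s) = -s := by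
          rw [neg_mul, mul_inv_cancel_left₀ hl.ne']
        rw [h2, h1]
      rw [funext e] at this
      -- this : ∫ s in Ioi 0, exp (-s) * G (s/l) = l * ∫ t in Ioi 0, exp (-l*t) * G t
      field_simp at this ⊢
      linarith [this]
    rw [hid1, hsub, mul_inv_cancel_left₀ hl.ne', ← integral_const_mul]
    exact integral_congr_ae (Eventually.of_forall fun s => by ring)
  -- dominated convergence
  have hbound_int : IntegrableOn (fun s : ℝ => Real.exp (-s) * s) (Ioi (0:ℝ)) := by
    have := Real.GammaIntegral_convergent (by norm_num : (0:ℝ) < 2)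
    refine this.congr_fun ?_ measurableSet_Ioi
    intro x hx
    norm_num [Real.rpow_one]
  have hGamma : ∫ s in Ioi (0:ℝ), Real.exp (-s) * (s * L) = L := by
    rw [show (fun s : ℝ => Real.exp (-s) * (s * L)) = fun s => L * (Real.exp (-s) * s) by
      ext s; ring, integral_const_mul]
    have h2 : ∫ s in Ioi (0:ℝ), Real.exp (-s) * s = 1 := by
      have := Real.Gamma_eq_integral (by norm_num : (0:ℝ) < 2)
      rw [Real.Gamma_two] at this
      norm_num [Real.rpow_one] at this
      exact this.symm
    rw [h2, mul_one]
  have hdct : Tendsto (fun l : ℝ => ∫ s in Ioi (0:ℝ), Real.exp (-s) * (l * G (s / l)))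
      (nhdsWithin 0 (Ioi 0)) (nhds (∫ s in Ioi (0:ℝ), Real.exp (-s) * (s * L))) := by
    refine tendsto_integral_filter_of_dominated_convergence
      (fun s => Real.exp (-s) * s) ?_ ?_ hbound_int ?_
    · filter_upwards with l
      exact ((Real.continuous_exp.comp continuous_neg).mul
        (continuous_const.mul (hGcont.comp (continuous_id.div_const l)))).aestronglyMeasurable
    · filter_upwards [self_mem_nhdsWithin] with l hl
      filter_upwards [ae_restrict_mem measurableSet_Ioi] with s hs
      have hl' : (0:ℝ) < l := hl
      have hsl : 0 ≤ s / l := div_nonneg (le_of_lt hs) hl'.le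
      rw [Real.norm_eq_abs, abs_of_nonneg (mul_nonneg (Real.exp_pos _).le
        (mul_nonneg hl'.le (hGnn _ hsl)))]
      have : l * G (s / l) ≤ s := by
        have := hGle (s / l) hsl
        calc l * G (s / l) ≤ l * (s / l) := mul_le_mul_of_nonneg_left this hl'.le
          _ = s := by field_simp
      exact mul_le_mul_of_nonneg_left this (Real.exp_pos _).le
    · filter_upwards [ae_restrict_mem measurableSet_Ioi] with s hs
      have hs' : (0:ℝ) < s := hs
      have h1 : Tendsto (fun l : ℝ => s / l) (nhdsWithin 0 (Ioi 0)) atTop := by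
        have h0 := Tendsto.const_mul_atTop hs' tendsto_inv_nhdsGT_zero
        exact h0.congr fun l => (div_eq_mul_inv s l).symm
      have h2 : Tendsto (fun l : ℝ => (1 / (s / l)) * G (s / l))
          (nhdsWithin 0 (Ioi 0)) (nhds L) := hces.comp h1
      have h3 : Tendsto (fun l : ℝ => (Real.exp (-s) * s) * ((1 / (s / l)) * G (s / l)))
          (nhdsWithin 0 (Ioi 0)) (nhds (Real.exp (-s) * (s * L))) := by
        have h4 := h2.const_mul (Real.exp (-s) * s)
        convert h4 using 2
        ring
      refine Tendsto.congr' ?_ h3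
      filter_upwards [self_mem_nhdsWithin] with l hl
      have hl' : (0:ℝ) < l := hl
      rw [one_div_div]
      field_simp
  rw [hGamma] at hdct
  refine hdct.congr' ?_
  filter_upwards [self_mem_nhdsWithin] with l hl
  exact (key l hl).symm
end
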